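/- Let k be a field, Q a strongly locally finite quiver, and Q' a full subquiver of Q. Let M, N be representations in Rep^-(Q) such that M ⊕ N is supported by Q' and injective restricted to a full subquiver Σ of Q', and let Ω be a successor-closed subquiver of Q' which contains the socle-support of (M ⊕ N)_Σ and the augmented complement of Σ in Q'. Then: (1) M ≅ N if and only if M_Ω ≅ N_Ω; (2) M is indecomposable if and only if M_Ω is indecomposable; (3) a morphism f: M → N is a section (resp. a retraction) if and only if f_Ω: M_Ω → N_Ω is a section (resp. a retraction). -/

import Mathlib

open CategoryTheory CategoryTheory.Limits

/-- A quiver is strongly locally finite if it is locally finite (finitely many arrows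
starting and ending at every vertex) and interval-finite (finitely many paths between
any two vertices). -/
def StronglyLocallyFinite (Q : Type) [Quiver.{0} Q] : Prop :=
  (∀ x : Q, Finite (Σ y : Q, x ⟶ y)) ∧
  (∀ y : Q, Finite (Σ x : Q, x ⟶ y)) ∧
  (∀ x y : Q, Finite (Quiver.Path x y))

variable (k : Type) [Field k] (Q : Type) [Quiver.{0} Q]

/-- The category `Rep(Q)` of `k`-representations of `Q`, i.e. functors from the
path category of `Q` to `k`-vector spaces. -/
abbrev RepQ := Paths Q ⥤ ModuleCat.{0} k

instance : HasFiniteBiproducts (RepQ k Q) := Abelian.hasFiniteBiproducts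

variable {Q}

/-- A vertex of `Q`, seen as an object of the path category. -/
abbrev vtx (x : Q) : Paths Q := x

/-- An arrow of `Q`, seen as a morphism of the path category. -/
abbrev arr {x y : Q} (e : x ⟶ y) : vtx x ⟶ vtx y := e.toPath

/-- A path of `Q`, seen as a morphism of the path category. -/
abbrev pth {x y : Q} (p : Quiver.Path x y) : vtx x ⟶ vtx y := p

universe uC vC

/-- Natural transformations between functors lifted from prefunctors are determined
by vertexwise data commuting with the arrow maps. -/
def liftNatTrans {C : Type uC} [Category.{vC} C] {φ ψ : Q ⥤q C}
    (app : ∀ x : Q, φ.obj x ⟶ ψ.obj x)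
    (h : ∀ {x y : Q} (e : x ⟶ y), φ.map e ≫ app y = app x ≫ ψ.map e) :
    Paths.lift φ ⟶ Paths.lift ψ where
  app x := app x
  naturality x y p := by
    induction p using Paths.induction_fixed_source with
    | id => exact (Category.id_comp _).trans (Category.comp_id _).symm
    | comp p e ih =>
      rw [Functor.map_comp, Functor.map_comp]
      erw [Category.assoc, Paths.of_map, Paths.lift_toPath, Paths.lift_toPath, h e]
      erw [← Category.assoc, ih, Category.assoc]
      rfl

variable (Q) in
/-- The prefunctor underlying the indecomposable projective representation `P_a`. -/
noncomputable def projPre (a : Q) : Q ⥤q ModuleCat.{0} k where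
  obj x := ModuleCat.of k (Quiver.Path a x →₀ k)
  map {x y} e := ModuleCat.ofHom (Finsupp.lmapDomain k k (fun ρ => ρ.cons e))

variable (Q) in
/-- The indecomposable projective representation `P_a`: the value at `x` is the
`k`-vector space with basis the set of paths from `a` to `x`, and an arrow acts by
composition of paths. -/
noncomputable def projRep (a : Q) : RepQ k Q := Paths.lift (projPre k Q a)

variable (Q) in
/-- The prefunctor underlying the indecomposable injective representation `I_a`. -/
noncomputable def injPre (a : Q) : Q ⥤q ModuleCat.{0} k where
  obj x := ModuleCat.of k (Quiver.Path x a → k)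
  map {x y} e := ModuleCat.ofHom (LinearMap.funLeft k k (fun σ : Quiver.Path y a => (Quiver.Hom.toPath e).comp σ))

variable (Q) in
/-- The indecomposable injective representation `I_a`: the value at `x` is the
`k`-vector space with basis the set of paths from `x` to `a` (realised as the dual-style
function space `Quiver.Path x a → k`, which is the same as the span of the paths since `Q`
is interval-finite); the arrow `α : x ⟶ y` sends a path `ρα` to `ρ` and kills the paths
not factoring through `α`. -/
noncomputable def injRep (a : Q) : RepQ k Q := Paths.lift (injPre k Q a)

variable (Q) in
/-- The representation with value `k` everywhere, all arrows acting as the identity. -/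
noncomputable def unitRep : RepQ k Q :=
  Paths.lift { obj := fun _ => ModuleCat.of k k, map := fun _ => ModuleCat.ofHom LinearMap.id }

variable (Q) in
/-- The prefunctor underlying the simple representation `S_a`. -/
noncomputable def simplePre (a : Q) : Q ⥤q ModuleCat.{0} k where
  obj x := ModuleCat.of k (PLift (x = a) → k)
  map _ := 0

variable (Q) in
/-- The simple representation `S_a` concentrated at the vertex `a`. -/
noncomputable def simpleRep (a : Q) : RepQ k Q := Paths.lift (simplePre k Q a)

/-- The representation `M ⊗_k V` obtained by tensoring vertexwise with a `k`-space `V`. -/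
noncomputable def tensorRep (M : RepQ k Q) (V : ModuleCat.{0} k) : RepQ k Q :=
  M ⋙ MonoidalCategory.tensorRight V

open Classical in
/-- Auxiliary linear map used to define restrictions of representations. -/
noncomputable def piCondMap {A B : Type} [AddCommGroup A] [Module k A] [AddCommGroup B]
    [Module k B] (φ : A →ₗ[k] B) (P P' : Prop) : (PLift P → A) →ₗ[k] (PLift P' → B) where
  toFun f _ := if h : P then φ (f ⟨h⟩) else 0
  map_add' f g := by funext _; dsimp; split <;> simp
  map_smul' c f := by funext _; dsimp; split <;> simp

variable (Q) in
/-- The prefunctor underlying the restriction of `M` to the full subquiver generated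
by a set `S` of vertices. -/
noncomputable def restrictPre (M : RepQ k Q) (S : Set Q) : Q ⥤q ModuleCat.{0} k where
  obj x := ModuleCat.of k (PLift (x ∈ S) → M.obj (vtx x))
  map {x y} e := ModuleCat.ofHom (piCondMap k (M.map (arr e)).hom (x ∈ S) (y ∈ S))

variable (Q) in
/-- The restriction `M_S` of a representation `M` to the full subquiver generated by a
set `S` of vertices: the value at `x ∈ S` is `M(x)`, the value elsewhere is `0`, arrows
with both ends in `S` act as in `M` and the other arrows act as zero. -/
noncomputable def restrictRep (M : RepQ k Q) (S : Set Q) : RepQ k Q :=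
  Paths.lift (restrictPre k Q M S)

variable (Q) in
/-- The restriction `f_S` of a morphism of representations to the full subquiver
generated by a set `S` of vertices. -/
noncomputable def restrictHom {M N : RepQ k Q} (f : M ⟶ N) (S : Set Q) :
    restrictRep k Q M S ⟶ restrictRep k Q N S :=
  liftNatTrans (fun x => ModuleCat.ofHom (LinearMap.compLeft (f.app (vtx x)).hom (PLift (x ∈ S)))) (by
    intro x y e
    ext g
    funext hy
    show (LinearMap.compLeft (f.app (vtx y)).hom (PLift (y ∈ S)))
        (piCondMap k (M.map (arr e)).hom (x ∈ S) (y ∈ S) g) hy =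
      (piCondMap k (N.map (arr e)).hom (x ∈ S) (y ∈ S))
        (LinearMap.compLeft (f.app (vtx x)).hom (PLift (x ∈ S)) g) hy
    by_cases hx : x ∈ S
    · simp only [piCondMap, LinearMap.compLeft, LinearMap.coe_mk, AddHom.coe_mk, dif_pos hx]
      exact congrArg (fun φ => ModuleCat.Hom.hom φ (g ⟨hx⟩)) (f.naturality (arr e))
    · simp [piCondMap, LinearMap.compLeft, dif_neg hx]
      exact (f.app (vtx y)).hom.map_zero)

variable (Q) in
/-- A subrepresentation of a representation, given by a family of subspaces stable
under the arrow maps. -/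
structure SubRep (M : RepQ k Q) : Type where
  carrier : ∀ x : Q, Submodule k (M.obj (vtx x))
  stable : ∀ {x y : Q} (e : x ⟶ y) (v : M.obj (vtx x)),
    v ∈ carrier x → M.map (arr e) v ∈ carrier y

variable (Q) in
/-- The socle of `M` at a vertex: the intersection of the kernels of the maps
associated to the arrows starting there. -/
def socle (M : RepQ k Q) (x : Q) : Submodule k (M.obj (vtx x)) :=
  ⨅ (y : Q) (e : x ⟶ y), LinearMap.ker (M.map (arr e)).hom

variable (Q) in
/-- The radical of `M` at a vertex: the sum of the images of the maps associated to the
arrows ending there. -/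
def radical (M : RepQ k Q) (x : Q) : Submodule k (M.obj (vtx x)) :=
  ⨆ (y : Q) (e : y ⟶ x), LinearMap.range (M.map (arr e)).hom

variable (Q) in
/-- The support of a representation: the set of vertices with nonzero value. -/
def suppR (M : RepQ k Q) : Set Q := {x : Q | Nontrivial (M.obj (vtx x))}

variable (Q) in
/-- A representation is locally finite dimensional if all its vertex spaces are
finite dimensional; these form the category `rep(Q)`. -/
def LocFinDim (M : RepQ k Q) : Prop := ∀ x : Q, FiniteDimensional k (M.obj (vtx x))

variable (Q) in
/-- A representation is finite dimensional if the total dimension `Σ_x dim M(x)` is finite,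
i.e. it is locally finite dimensional with finite support. -/
def FinDimRep (M : RepQ k Q) : Prop := (suppR k Q M).Finite ∧ LocFinDim k Q M

variable (Q) in
/-- The socle of `M` is an essential subrepresentation of `M`. -/
def SocleEssential (M : RepQ k Q) : Prop :=
  ∀ N : SubRep k Q M, (∃ x, N.carrier x ≠ ⊥) → ∃ x, N.carrier x ⊓ socle k Q M x ≠ ⊥

variable (Q) in
/-- The socle of `M` is finitely supported. -/
def SocleFinSupported (M : RepQ k Q) : Prop := {x : Q | socle k Q M x ≠ ⊥}.Finite

variable (Q) in
/-- The radical of `M` is a superfluous subrepresentation of `M`,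
i.e. the top of `M` is essential over `M`. -/
def TopEssential (M : RepQ k Q) : Prop :=
  ∀ N : SubRep k Q M, (∀ x, N.carrier x ⊔ radical k Q M x = ⊤) → ∀ x, N.carrier x = ⊤

variable (Q) in
/-- The top of `M` is finitely supported. -/
def TopFinSupported (M : RepQ k Q) : Prop := {x : Q | radical k Q M x ≠ ⊤}.Finite

variable (Q) in
/-- Membership in `Inj(Q)`: the full additive subcategory of `Rep(Q)` generated by the
representations `I_a ⊗ V` with `a` a vertex and `V` a `k`-space. -/
def MemInj (M : RepQ k Q) : Prop :=
  ∃ (n : ℕ) (a : Fin n → Q) (V : Fin n → ModuleCat.{0} k),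
    Nonempty (M ≅ ⨁ (fun i => tensorRep k (injRep k Q (a i)) (V i)))

variable (Q) in
/-- Membership in `Proj(Q)`: the full additive subcategory of `Rep(Q)` generated by the
representations `P_a ⊗ V` with `a` a vertex and `V` a `k`-space. -/
def MemProj (M : RepQ k Q) : Prop :=
  ∃ (n : ℕ) (a : Fin n → Q) (V : Fin n → ModuleCat.{0} k),
    Nonempty (M ≅ ⨁ (fun i => tensorRep k (projRep k Q (a i)) (V i)))

variable (Q) in
/-- Membership in `inj(Q)`: the locally finite dimensional representations in `Inj(Q)`. -/
def MemInjL (M : RepQ k Q) : Prop := MemInj k Q M ∧ LocFinDim k Q M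

variable (Q) in
/-- Membership in `proj(Q)`: the locally finite dimensional representations in `Proj(Q)`. -/
def MemProjL (M : RepQ k Q) : Prop := MemProj k Q M ∧ LocFinDim k Q M

variable (Q) in
/-- A representation is almost finitely presented if it admits a projective resolution
`0 → P₁ → P₀ → M → 0` with `P₀, P₁ ∈ Proj(Q)`. -/
def AlmostFinPresented (M : RepQ k Q) : Prop :=
  ∃ (P₁ P₀ : RepQ k Q) (f : P₁ ⟶ P₀) (g : P₀ ⟶ M) (w : f ≫ g = 0),
    MemProj k Q P₁ ∧ MemProj k Q P₀ ∧ (ShortComplex.mk f g w).ShortExact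

variable (Q) in
/-- A representation is almost finitely co-presented if it admits an injective
co-resolution `0 → M → I₀ → I₁ → 0` with `I₀, I₁ ∈ Inj(Q)`. -/
def AlmostFinCopresented (M : RepQ k Q) : Prop :=
  ∃ (I₀ I₁ : RepQ k Q) (f : M ⟶ I₀) (g : I₀ ⟶ I₁) (w : f ≫ g = 0),
    MemInj k Q I₀ ∧ MemInj k Q I₁ ∧ (ShortComplex.mk f g w).ShortExact

variable (Q) in
/-- A representation is finitely presented if it admits a projective resolution
`0 → P₁ → P₀ → M → 0` with `P₀, P₁ ∈ proj(Q)`; these form the category `rep^+(Q)`. -/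
def FinPresented (M : RepQ k Q) : Prop :=
  ∃ (P₁ P₀ : RepQ k Q) (f : P₁ ⟶ P₀) (g : P₀ ⟶ M) (w : f ≫ g = 0),
    MemProjL k Q P₁ ∧ MemProjL k Q P₀ ∧ (ShortComplex.mk f g w).ShortExact

variable (Q) in
/-- A representation is finitely co-presented if it admits an injective co-resolution
`0 → M → I₀ → I₁ → 0` with `I₀, I₁ ∈ inj(Q)`; these form the category `rep^-(Q)`. -/
def FinCopresented (M : RepQ k Q) : Prop :=
  ∃ (I₀ I₁ : RepQ k Q) (f : M ⟶ I₀) (g : I₀ ⟶ I₁) (w : f ≫ g = 0),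
    MemInjL k Q I₀ ∧ MemInjL k Q I₁ ∧ (ShortComplex.mk f g w).ShortExact

variable (Q) in
/-- A right infinite path with all vertices in `S`. -/
def HasRightInfPathIn (S : Set Q) : Prop :=
  ∃ (p : ℕ → Q) (_ : ∀ n, p n ⟶ p (n + 1)), ∀ n, p n ∈ S

variable (Q) in
/-- A left infinite path with all vertices in `S`. -/
def HasLeftInfPathIn (S : Set Q) : Prop :=
  ∃ (p : ℕ → Q) (_ : ∀ n, p (n + 1) ⟶ p n), ∀ n, p n ∈ S

/-- The list of vertices visited by a path. -/
def pathVerts {V : Type*} [Quiver V] {x : V} : ∀ {y : V}, Quiver.Path x y → List V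
  | _, Quiver.Path.nil => [x]
  | y, Quiver.Path.cons p _ => pathVerts p ++ [y]

variable (Q) in
/-- The full subquiver generated by `S` is socle-finite: every vertex of `S` is a
predecessor (within `S`) of one of finitely many fixed vertices. -/
def SetSocleFinite (S : Set Q) : Prop :=
  ∃ T : Finset Q, ∀ x ∈ S, ∃ t ∈ T, ∃ p : Quiver.Path x t, ∀ z ∈ pathVerts p, z ∈ S

variable (Q) in
/-- The full subquiver generated by `S` is top-finite: every vertex of `S` is a
successor (within `S`) of one of finitely many fixed vertices. -/
def SetTopFinite (S : Set Q) : Prop :=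
  ∃ T : Finset Q, ∀ x ∈ S, ∃ t ∈ T, ∃ p : Quiver.Path t x, ∀ z ∈ pathVerts p, z ∈ S

section AlmostSplit

universe uD vD
variable {C : Type uD} [Category.{vD} C]

/-- A morphism is a section if it admits a left inverse. -/
def IsSect {X Y : C} (f : X ⟶ Y) : Prop := ∃ r : Y ⟶ X, f ≫ r = 𝟙 X

/-- A morphism is a retraction if it admits a right inverse. -/
def IsRetr {X Y : C} (f : X ⟶ Y) : Prop := ∃ s : Y ⟶ X, s ≫ f = 𝟙 Y

/-- A morphism `g : Y ⟶ Z` is right almost split relative to the object class `P` if it is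
not a retraction and every non-retraction `h : W ⟶ Z` with `W` in `P` factors through `g`. -/
def RightAS (P : C → Prop) {Y Z : C} (g : Y ⟶ Z) : Prop :=
  ¬ IsRetr g ∧ ∀ ⦃W : C⦄, P W → ∀ h : W ⟶ Z, ¬ IsRetr h → ∃ u : W ⟶ Y, u ≫ g = h

/-- A morphism `f : X ⟶ Y` is left almost split relative to the object class `P` if it is
not a section and every non-section `h : X ⟶ W` with `W` in `P` factors through `f`. -/
def LeftAS (P : C → Prop) {X Y : C} (f : X ⟶ Y) : Prop :=
  ¬ IsSect f ∧ ∀ ⦃W : C⦄, P W → ∀ h : X ⟶ W, ¬ IsSect h → ∃ u : Y ⟶ W, f ≫ u = h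

/-- A morphism `g : Y ⟶ Z` is right minimal. -/
def RightMin {Y Z : C} (g : Y ⟶ Z) : Prop := ∀ u : Y ⟶ Y, u ≫ g = g → IsIso u

/-- A morphism `f : X ⟶ Y` is left minimal. -/
def LeftMin {X Y : C} (f : X ⟶ Y) : Prop := ∀ u : Y ⟶ Y, f ≫ u = f → IsIso u

/-- Minimal right almost split relative to the object class `P`. -/
def MinRightAS (P : C → Prop) {Y Z : C} (g : Y ⟶ Z) : Prop := RightAS P g ∧ RightMin g

/-- Minimal left almost split relative to the object class `P`. -/
def MinLeftAS (P : C → Prop) {X Y : C} (f : X ⟶ Y) : Prop := LeftAS P f ∧ LeftMin f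

/-- An object is indecomposable if it is nonzero and its only idempotent endomorphisms
are `0` and the identity (equivalently, it is not a direct sum of two nonzero objects). -/
def Indec [Limits.HasZeroMorphisms C] (X : C) : Prop :=
  ¬ Limits.IsZero X ∧ ∀ e : X ⟶ X, e ≫ e = e → e = 0 ∨ e = 𝟙 X

/-- A morphism is irreducible relative to the object class `P` if it is neither a section
nor a retraction while in any factorization through an object of `P` the first factor is a
section or the second factor is a retraction. -/
def IrredOn (P : C → Prop) {X Y : C} (f : X ⟶ Y) : Prop :=
  ¬ IsSect f ∧ ¬ IsRetr f ∧
    ∀ ⦃Z : C⦄, P Z → ∀ (g : X ⟶ Z) (h : Z ⟶ Y), g ≫ h = f → IsSect g ∨ IsRetr h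

/-- An object `M` is projective relative to the object class `P`: any morphism from `M` to
the codomain of an epimorphism between objects of `P` lifts. -/
def ProjOn (P : C → Prop) (M : C) : Prop :=
  ∀ ⦃A B : C⦄, P A → P B → ∀ (g : A ⟶ B), Epi g → ∀ h : M ⟶ B, ∃ l : M ⟶ A, l ≫ g = h

/-- An object `M` is injective relative to the object class `P`: any morphism to `M` from
the domain of a monomorphism between objects of `P` extends. -/
def InjOn (P : C → Prop) (M : C) : Prop :=
  ∀ ⦃A B : C⦄, P A → P B → ∀ (g : A ⟶ B), Mono g → ∀ h : A ⟶ M, ∃ l : B ⟶ M, g ≫ l = h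

/-- An essential monomorphism, relative to the object class `P`. -/
def EssMonoOn (P : C → Prop) {X Y : C} (f : X ⟶ Y) : Prop :=
  Mono f ∧ ∀ ⦃W : C⦄, P W → ∀ g : Y ⟶ W, Mono (f ≫ g) → Mono g

/-- A superfluous epimorphism, relative to the object class `P`. -/
def SupEpiOn (P : C → Prop) {X Y : C} (f : X ⟶ Y) : Prop :=
  Epi f ∧ ∀ ⦃W : C⦄, P W → ∀ g : W ⟶ X, Epi (g ≫ f) → Epi g

end AlmostSplit

/-- An almost split (Auslander-Reiten) sequence, relative to the object class `P` in an
ambient abelian category: a short exact sequence with terms in `P` whose left map is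
minimal left almost split and whose right map is minimal right almost split relative
to `P`. -/
def IsASSeqOn {C : Type uC} [Category.{vC} C] [Abelian C] (P : C → Prop)
    (S : ShortComplex C) : Prop :=
  S.ShortExact ∧ P S.X₁ ∧ P S.X₂ ∧ P S.X₃ ∧ MinLeftAS P S.f ∧ MinRightAS P S.g

variable (Q) in
/-- The morphism `P_y ⟶ P_x` determined by a path `p` from `x` to `y`
(composition with `p`). -/
noncomputable def projPathTrans {x y : Q} (p : Quiver.Path x y) :
    projRep k Q y ⟶ projRep k Q x :=
  liftNatTrans (fun z => ModuleCat.ofHom (Finsupp.lmapDomain k k (fun ρ : Quiver.Path y z => p.comp ρ))) (by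
    intro z w e
    apply ModuleCat.hom_ext
    show (Finsupp.lmapDomain k k _).comp (Finsupp.lmapDomain k k _) =
      (Finsupp.lmapDomain k k _).comp (Finsupp.lmapDomain k k _)
    rw [← Finsupp.lmapDomain_comp, ← Finsupp.lmapDomain_comp]
    rfl)

variable (Q) in
/-- The morphism `I_y ⟶ I_x` determined by a path `p` from `x` to `y`. -/
noncomputable def injPathTrans {x y : Q} (p : Quiver.Path x y) :
    injRep k Q y ⟶ injRep k Q x :=
  liftNatTrans (fun z => ModuleCat.ofHom (LinearMap.funLeft k k (fun σ : Quiver.Path z x => σ.comp p))) (by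
    intro z w e
    ext h
    funext σ
    show h ((Quiver.Hom.toPath e).comp (σ.comp p)) = h (((Quiver.Hom.toPath e).comp σ).comp p)
    rw [Quiver.Path.comp_assoc] <;> try rfl)

variable (Q) in
/-- The linear combination of path morphisms `P_y ⟶ P_x` determined by an element of the
span of the paths from `x` to `y`. -/
noncomputable def projCombTrans {x y : Q} (c : Quiver.Path x y →₀ k) :
    projRep k Q y ⟶ projRep k Q x :=
  c.sum (fun p cp => cp • projPathTrans k Q p)

variable (Q) in
/-- The linear combination of path morphisms `I_y ⟶ I_x` determined by an element of the
span of the paths from `x` to `y`. -/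
noncomputable def injCombTrans {x y : Q} (c : Quiver.Path x y →₀ k) :
    injRep k Q y ⟶ injRep k Q x :=
  c.sum (fun p cp => cp • injPathTrans k Q p)

variable (Q) in
/-- Evaluation of a morphism `P_y ⟶ P_x` on the trivial path, yielding an element of the
span of the paths from `x` to `y`. -/
noncomputable def evalProjHom {x y : Q} (u : projRep k Q y ⟶ projRep k Q x) :
    Quiver.Path x y →₀ k :=
  u.app (vtx y) (Finsupp.single Quiver.Path.nil 1)

open Classical in
variable (Q) in
/-- Evaluation of a morphism `I_y ⟶ I_x`, yielding an element of the span of the paths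
from `x` to `y` (here `Q` is interval-finite). -/
noncomputable def evalInjHom (hfin : ∀ x y : Q, Finite (Quiver.Path x y)) {x y : Q}
    (u : injRep k Q y ⟶ injRep k Q x) : Quiver.Path x y →₀ k :=
  haveI := hfin x y
  Finsupp.equivFunOnFinite.symm (fun p => u.app (vtx x) (Pi.single p 1) Quiver.Path.nil)

variable (Q) in
/-- The Nakayama functor `ν` applied to a morphism between objects of `proj(Q)` written as
finite direct sums of representations `P_a`; the value is the corresponding morphism between
the direct sums of the representations `I_a`. -/
noncomputable def nuMap {r s : ℕ} (xv : Fin r → Q) (yv : Fin s → Q)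
    (f : (⨁ fun j => projRep k Q (yv j)) ⟶ (⨁ fun i => projRep k Q (xv i))) :
    (⨁ fun j => injRep k Q (yv j)) ⟶ (⨁ fun i => injRep k Q (xv i)) :=
  biproduct.matrix fun j i =>
    injCombTrans k Q (evalProjHom k Q
      (biproduct.ι (fun j => projRep k Q (yv j)) j ≫ f ≫ biproduct.π (fun i => projRep k Q (xv i)) i))

variable (Q) in
/-- The inverse Nakayama functor `ν⁻` applied to a morphism between objects of `inj(Q)`
written as finite direct sums of representations `I_a`. -/
noncomputable def nuInvMap (hfin : ∀ x y : Q, Finite (Quiver.Path x y)) {r s : ℕ}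
    (xv : Fin r → Q) (yv : Fin s → Q)
    (g : (⨁ fun i => injRep k Q (xv i)) ⟶ (⨁ fun j => injRep k Q (yv j))) :
    (⨁ fun i => projRep k Q (xv i)) ⟶ (⨁ fun j => projRep k Q (yv j)) :=
  biproduct.matrix fun i j =>
    projCombTrans k Q (evalInjHom k Q hfin
      (biproduct.ι (fun i => injRep k Q (xv i)) i ≫ g ≫ biproduct.π (fun j => injRep k Q (yv j)) j))

variable (Q) in
/-- `0 → ⊕_j P_{y_j} → ⊕_i P_{x_i} → M → 0` is a minimal projective resolution:
a short exact sequence in which the two epimorphisms onto `M` and onto the kernel of `ε`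
are projective covers (superfluous epimorphisms). -/
structure IsMinProjRes (M : RepQ k Q) {r s : ℕ} (xv : Fin r → Q) (yv : Fin s → Q)
    (f : (⨁ fun j => projRep k Q (yv j)) ⟶ (⨁ fun i => projRep k Q (xv i)))
    (ε : (⨁ fun i => projRep k Q (xv i)) ⟶ M) : Prop where
  w : f ≫ ε = 0
  shortExact : (ShortComplex.mk f ε w).ShortExact
  superfluous_ε : SupEpiOn (fun _ => True) ε
  superfluous_f : SupEpiOn (fun _ => True) (kernel.lift ε f w)

variable (Q) in
/-- `0 → M → ⊕_i I_{x_i} → ⊕_j I_{y_j} → 0` is a minimal injective co-resolution: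
a short exact sequence in which the two monomorphisms from `M` and from the cokernel of `ι`
are injective hulls (essential monomorphisms). -/
structure IsMinInjCores (M : RepQ k Q) {r s : ℕ} (xv : Fin r → Q) (yv : Fin s → Q)
    (ι : M ⟶ (⨁ fun i => injRep k Q (xv i)))
    (g : (⨁ fun i => injRep k Q (xv i)) ⟶ (⨁ fun j => injRep k Q (yv j))) : Prop where
  w : ι ≫ g = 0
  shortExact : (ShortComplex.mk ι g w).ShortExact
  essential_ι : EssMonoOn (fun _ => True) ι
  essential_g : EssMonoOn (fun _ => True) (cokernel.desc ι g w)

variable (Q) in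
/-- `N` is an Auslander-Reiten translate `DTr M` of `M`: for some minimal projective
resolution `0 → P₁ → P₀ → M → 0` by finite direct sums of representations `P_a`,
the representation `N` is isomorphic to the kernel of `ν(f) : ν(P₁) ⟶ ν(P₀)`. -/
def IsDTrOf (N M : RepQ k Q) : Prop :=
  ∃ (r s : ℕ) (xv : Fin r → Q) (yv : Fin s → Q)
    (f : (⨁ fun j => projRep k Q (yv j)) ⟶ (⨁ fun i => projRep k Q (xv i)))
    (ε : (⨁ fun i => projRep k Q (xv i)) ⟶ M),
      IsMinProjRes k Q M xv yv f ε ∧ Nonempty (N ≅ kernel (nuMap k Q xv yv f))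

variable (Q) in
/-- `N` is an inverse Auslander-Reiten translate `TrD M` of `M`: for some minimal
injective co-resolution `0 → M → I₀ → I₁ → 0` by finite direct sums of representations
`I_a`, the representation `N` is isomorphic to the cokernel of `ν⁻(g) : ν⁻(I₀) ⟶ ν⁻(I₁)`. -/
def IsTrDOf (hfin : ∀ x y : Q, Finite (Quiver.Path x y)) (N M : RepQ k Q) : Prop :=
  ∃ (r s : ℕ) (xv : Fin r → Q) (yv : Fin s → Q)
    (ι : M ⟶ (⨁ fun i => injRep k Q (xv i)))
    (g : (⨁ fun i => injRep k Q (xv i)) ⟶ (⨁ fun j => injRep k Q (yv j))),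
      IsMinInjCores k Q M xv yv ι g ∧ Nonempty (N ≅ cokernel (nuInvMap k Q hfin xv yv g))

variable (Q) in
/-- `N ≅ DTr^n M`, where in particular all the intermediate translates are defined. -/
def IsDTrPow : ℕ → RepQ k Q → RepQ k Q → Prop
  | 0, N, M => Nonempty (N ≅ M)
  | n + 1, N, M => ∃ L : RepQ k Q, IsDTrPow n L M ∧ IsDTrOf k Q N L

variable (Q) in
/-- The quiver `Q` is connected: any two vertices are joined by a walk. -/
def QConnected : Prop :=
  ∀ x y : Q, Nonempty (Quiver.Path (a := (x : Quiver.Symmetrify Q)) (y : Quiver.Symmetrify Q))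

/-- `T` is a successor-closed subquiver of the full subquiver of `Q` generated by `S`. -/
def SuccClosedIn (T S : Set Q) : Prop :=
  T ⊆ S ∧ ∀ ⦃x y : Q⦄, (x ⟶ y) → x ∈ T → y ∈ S → y ∈ T

/-- The augmented complement of `T` in the full subquiver of `Q` generated by `S`: the
vertices of `S` not in `T` together with the endpoints of the arrows of `S` not lying in
the full subquiver generated by `T`. -/
def augComplement (T S : Set Q) : Set Q :=
  {z | z ∈ S ∧ z ∉ T} ∪
    {z | z ∈ S ∧ ∃ (x y : Q) (_ : x ⟶ y), x ∈ S ∧ y ∈ S ∧ ¬(x ∈ T ∧ y ∈ T) ∧ (z = x ∨ z = y)}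

/-! ### Infrastructure for the proof -/

section Infra

open Classical

variable {k : Type} [Field k] {Q : Type} [Quiver.{0} Q]

/-- Build a natural transformation between arbitrary functors out of the path category
from arrow-level data. -/
def mkNT {F G : RepQ k Q}
    (app : ∀ x : Q, F.obj (vtx x) ⟶ G.obj (vtx x))
    (h : ∀ {x y : Q} (e : x ⟶ y), F.map (arr e) ≫ app y = app x ≫ G.map (arr e)) :
    F ⟶ G where
  app x := app x
  naturality x y p := by
    induction p using Paths.induction_fixed_source with
    | id =>
      show F.map (𝟙 x) ≫ app x = app x ≫ G.map (𝟙 x)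
      simp
    | comp p e ih =>
      rw [Functor.map_comp, Functor.map_comp]
      erw [Category.assoc, h e, ← Category.assoc, ih, Category.assoc]

@[simp] lemma mkNT_app {F G : RepQ k Q}
    (app : ∀ x : Q, F.obj (vtx x) ⟶ G.obj (vtx x)) (h) (x : Q) :
    (mkNT app h).app (vtx x) = app x := rfl

lemma piCondMap_apply {A B : Type} [AddCommGroup A] [Module k A] [AddCommGroup B]
    [Module k B] (φ : A →ₗ[k] B) (P P' : Prop) (f : PLift P → A) (h' : PLift P') :
    piCondMap k φ P P' f h' = if h : P then φ (f ⟨h⟩) else 0 := rfl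

lemma restrictRep_map_arr (M : RepQ k Q) (S : Set Q) {x y : Q} (e : x ⟶ y) :
    (restrictRep k Q M S).map (arr e) =
      ModuleCat.ofHom (piCondMap k (M.map (arr e)).hom (x ∈ S) (y ∈ S)) :=
  Paths.lift_toPath _ _

lemma restrictHom_app {M N : RepQ k Q} (f : M ⟶ N) (S : Set Q) (x : Q) :
    (restrictHom k Q f S).app (vtx x) =
      ModuleCat.ofHom (LinearMap.compLeft (f.app (vtx x)).hom (PLift (x ∈ S))) := rfl

lemma restrictHom_id (M : RepQ k Q) (S : Set Q) :
    restrictHom k Q (𝟙 M) S = 𝟙 (restrictRep k Q M S) := by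
  apply NatTrans.ext; funext x; apply ModuleCat.hom_ext; apply LinearMap.ext; intro w; rfl

lemma restrictHom_comp {M N P : RepQ k Q} (f : M ⟶ N) (g : N ⟶ P) (S : Set Q) :
    restrictHom k Q (f ≫ g) S = restrictHom k Q f S ≫ restrictHom k Q g S := by
  apply NatTrans.ext; funext x; apply ModuleCat.hom_ext; apply LinearMap.ext; intro w; rfl

lemma restrictHom_zero (M N : RepQ k Q) (S : Set Q) :
    restrictHom k Q (0 : M ⟶ N) S = 0 := by
  apply NatTrans.ext; funext x; apply ModuleCat.hom_ext; apply LinearMap.ext; intro w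
  funext hp
  rfl

lemma restrictHom_sub {M N : RepQ k Q} (f g : M ⟶ N) (S : Set Q) :
    restrictHom k Q (f - g) S = restrictHom k Q f S - restrictHom k Q g S := by
  apply NatTrans.ext; funext x; apply ModuleCat.hom_ext; apply LinearMap.ext; intro w; rfl

/-- Unwrap a linear map between `PLift`-wrapped spaces. -/
noncomputable def unw {A B : Type} [AddCommGroup A] [Module k A] [AddCommGroup B]
    [Module k B] {P P' : Prop} (φ : (PLift P → A) →ₗ[k] (PLift P' → B)) : A →ₗ[k] B :=
  if h' : P' then
    (LinearMap.proj (⟨h'⟩ : PLift P')).comp (φ.comp (LinearMap.pi fun _ => LinearMap.id))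
  else 0

lemma unw_apply {A B : Type} [AddCommGroup A] [Module k A] [AddCommGroup B]
    [Module k B] {P P' : Prop} (φ : (PLift P → A) →ₗ[k] (PLift P' → B)) (h' : P') (v : A)
    (hp' : PLift P') :
    unw φ v = φ (fun _ => v) hp' := by
  rw [unw, dif_pos h']
  rfl


section TensorPi

variable (k : Type) [Field k]

/-- The forward map `(ι → k) ⊗ V → (ι → V)`. -/
noncomputable def tensorPiFwd (ι : Type) (V : ModuleCat.{0} k) :
    (TensorProduct k (ι → k) V) →ₗ[k] (ι → V) :=
  TensorProduct.lift
    { toFun := fun f =>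
        { toFun := fun v => fun i => f i • v
          map_add' := fun a b => by funext i; simp [smul_add]
          map_smul' := fun c a => by funext i; dsimp; rw [smul_comm]
        }
      map_add' := fun f g => by
        apply LinearMap.ext; intro v; funext i
        dsimp; rw [add_smul]
      map_smul' := fun c f => by
        apply LinearMap.ext; intro v; funext i
        dsimp; rw [mul_smul] }

@[simp] lemma tensorPiFwd_tmul (ι : Type) (V : ModuleCat.{0} k) (f : ι → k) (v : V) :
    tensorPiFwd k ι V (f ⊗ₜ[k] v) = fun i => f i • v := rfl

open Classical in
/-- The inverse map `(ι → V) → (ι → k) ⊗ V` for finite `ι`. -/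
noncomputable def tensorPiInv (ι : Type) [Fintype ι] (V : ModuleCat.{0} k) :
    (ι → V) →ₗ[k] (TensorProduct k (ι → k) V) :=
  ∑ i : ι, (TensorProduct.mk k (ι → k) V (Pi.single i 1)).comp (LinearMap.proj i)

open Classical in
/-- The isomorphism `(ι → k) ⊗ V ≅ (ι → V)` for finite `ι`. -/
noncomputable def tensorPi (ι : Type) [Fintype ι] (V : ModuleCat.{0} k) :
    (TensorProduct k (ι → k) V) ≃ₗ[k] (ι → V) :=
  LinearEquiv.ofLinear (tensorPiFwd k ι V) (tensorPiInv k ι V)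
    (by
      apply LinearMap.ext; intro g; funext j
      simp only [LinearMap.coe_comp, Function.comp_apply, LinearMap.id_apply, tensorPiInv,
        LinearMap.coe_sum, Finset.sum_apply, map_sum, TensorProduct.mk_apply,
        LinearMap.proj_apply, tensorPiFwd_tmul]
      rw [Finset.sum_eq_single j]
      · rw [Pi.single_eq_same, one_smul]
      · intro i _ hij
        rw [Pi.single_eq_of_ne (Ne.symm hij), zero_smul]
      · intro h; exact absurd (Finset.mem_univ j) h)
    (by
      apply TensorProduct.ext'
      intro f v
      simp only [LinearMap.coe_comp, Function.comp_apply, LinearMap.id_apply,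
        tensorPiFwd_tmul, tensorPiInv, LinearMap.coe_sum, Finset.sum_apply,
        TensorProduct.mk_apply, LinearMap.proj_apply]
      have h1 : ∀ i : ι, (Pi.single i 1 : ι → k) ⊗ₜ[k] (f i • v)
          = (f i • (Pi.single i 1 : ι → k)) ⊗ₜ[k] v :=
        fun i => (TensorProduct.smul_tmul _ _ _).symm
      have h2 : (∑ i : ι, f i • (Pi.single i 1 : ι → k)) = f := by
        funext j
        rw [Finset.sum_apply, Finset.sum_eq_single j]
        · rw [Pi.smul_apply, Pi.single_eq_same, smul_eq_mul, mul_one]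
        · intro i _ hij
          rw [Pi.smul_apply, Pi.single_eq_of_ne (Ne.symm hij), smul_eq_mul, mul_zero]
        · intro h; exact absurd (Finset.mem_univ j) h
      calc ∑ i : ι, (Pi.single i 1 : ι → k) ⊗ₜ[k] (f i • v)
          = ∑ i : ι, (f i • (Pi.single i 1 : ι → k)) ⊗ₜ[k] v :=
            Finset.sum_congr rfl (fun i _ => h1 i)
        _ = (∑ i : ι, f i • (Pi.single i 1 : ι → k)) ⊗ₜ[k] v := by rw [TensorProduct.sum_tmul]
        _ = f ⊗ₜ[k] v := by rw [h2])

@[simp] lemma tensorPi_tmul (ι : Type) [Fintype ι] (V : ModuleCat.{0} k) (f : ι → k) (v : V) :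
    tensorPi k ι V (f ⊗ₜ[k] v) = fun i => f i • v := rfl

end TensorPi

section Conj

variable {k : Type} [Field k] {Q : Type} [Quiver.{0} Q]

/-- The prefunctor underlying the `V`-valued function-space realisation of `I_a ⊗ V`. -/
noncomputable def funPre (a : Q) (V : ModuleCat.{0} k) : Q ⥤q ModuleCat.{0} k where
  obj x := ModuleCat.of k (Quiver.Path x a → V)
  map {x y} e := ModuleCat.ofHom (LinearMap.funLeft k V (fun σ : Quiver.Path y a => (Quiver.Hom.toPath e).comp σ))

/-- The `V`-valued function-space realisation of `I_a ⊗ V`. -/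
noncomputable def funRep (a : Q) (V : ModuleCat.{0} k) : RepQ k Q := Paths.lift (funPre a V)

lemma funRep_map_arr (a : Q) (V : ModuleCat.{0} k) {x y : Q} (e : x ⟶ y)
    (t : (funRep (k := k) (Q := Q) a V).obj (vtx x)) (σ : Quiver.Path y a) :
    ((funRep a V).map (arr e)) t σ = t ((Quiver.Hom.toPath e).comp σ) := by
  rw [show (funRep (k := k) (Q := Q) a V).map (arr e) = (funPre a V).map e from
    Paths.lift_toPath _ _]
  rfl

lemma funRep_map_path (a : Q) (V : ModuleCat.{0} k) {x y : Q} (p : Quiver.Path x y)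
    (t : (funRep (k := k) (Q := Q) a V).obj (vtx x)) (σ : Quiver.Path y a) :
    ((funRep a V).map (pth p)) t σ = t (p.comp σ) := by
  revert σ
  induction p with
  | nil =>
    intro σ
    have h0 : (pth (Quiver.Path.nil) : vtx x ⟶ vtx x) = 𝟙 (vtx x) := rfl
    rw [h0, CategoryTheory.Functor.map_id, Quiver.Path.nil_comp]
    rfl
  | cons p e ih =>
    intro σ
    have hF : (funRep (k := k) (Q := Q) a V).map (@Quiver.Path.cons Q _ x _ _ p e)
        = (funRep a V).map (pth p) ≫ (funRep a V).map (arr e) := by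
      rw [← Functor.map_comp]; rfl
    rw [hF]
    have happ : ((funRep (k := k) (Q := Q) a V).map (pth p) ≫ (funRep a V).map (arr e)) t
        = (funRep a V).map (arr e) ((funRep a V).map (pth p) t) := rfl
    rw [happ, funRep_map_arr, ih]
    have hc : p.comp ((Quiver.Hom.toPath e).comp σ)
        = (Quiver.Path.cons p e).comp σ := by
      rw [← Quiver.Path.comp_assoc]; rfl
    rw [hc]

variable (hfin : ∀ x y : Q, Finite (Quiver.Path x y))

/-- The identification of `I_a ⊗ V` at vertex `x` with `Q(x,a) → V`. -/
noncomputable def tpi (a : Q) (V : ModuleCat.{0} k) (x : Q) :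
    (TensorProduct k (Quiver.Path x a → k) V) ≃ₗ[k] (Quiver.Path x a → V) :=
  letI : Fintype (Quiver.Path x a) := @Fintype.ofFinite _ (hfin x a)
  tensorPi k _ V

lemma tensorRep_map_arr_tmul (a : Q) (V : ModuleCat.{0} k) {x y : Q} (e : x ⟶ y)
    (f : Quiver.Path x a → k) (v : V) :
    ((tensorRep k (injRep k Q a) V).map (arr e)) (f ⊗ₜ[k] v)
      = (fun σ : Quiver.Path y a => f ((Quiver.Hom.toPath e).comp σ)) ⊗ₜ[k] v := by
  rfl

lemma tpi_nat (a : Q) (V : ModuleCat.{0} k) {x y : Q} (e : x ⟶ y)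
    (t : (tensorRep k (injRep k Q a) V).obj (vtx x)) :
    tpi hfin a V y (((tensorRep k (injRep k Q a) V).map (arr e)) t)
      = ((funRep a V).map (arr e)) (tpi hfin a V x t) := by
  induction t using TensorProduct.induction_on with
  | zero => erw [map_zero]
  | tmul f v =>
    funext σ
    erw [funRep_map_arr]
    have h1 := congrArg (fun z => tpi hfin a V y z σ) (tensorRep_map_arr_tmul (k := k) a V e f v)
    exact h1.trans rfl
  | add s t hs ht =>
    erw [map_add, map_add, map_add, map_add, hs, ht]
    rfl

/-- The natural isomorphism `I_a ⊗ V ≅ funRep a V`. -/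
noncomputable def tensorFunIso (a : Q) (V : ModuleCat.{0} k) :
    tensorRep k (injRep k Q a) V ≅ funRep a V where
  hom := mkNT (fun x => ModuleCat.ofHom (tpi hfin a V x).toLinearMap) (by
    intro x y e
    apply ModuleCat.hom_ext
    apply TensorProduct.ext'
    intro f v
    show tpi hfin a V y (((tensorRep k (injRep k Q a) V).map (arr e)) (f ⊗ₜ[k] v))
      = ((funRep a V).map (arr e)) (tpi hfin a V x (f ⊗ₜ[k] v))
    exact tpi_nat hfin a V e _)
  inv := mkNT (fun x => ModuleCat.ofHom (tpi hfin a V x).symm.toLinearMap) (by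
    intro x y e
    apply ModuleCat.hom_ext
    apply LinearMap.ext
    intro t
    show (tpi hfin a V y).symm (((funRep a V).map (arr e)) t)
      = ((tensorRep k (injRep k Q a) V).map (arr e)) ((tpi hfin a V x).symm t)
    apply (tpi hfin a V y).injective
    refine (LinearEquiv.apply_symm_apply _ _).trans ?_
    refine Eq.trans ?_ (tpi_nat hfin a V e _).symm
    exact congrArg _ (LinearEquiv.apply_symm_apply _ _).symm)
  hom_inv_id := by
    apply NatTrans.ext; funext x; apply ModuleCat.hom_ext; apply LinearMap.ext; intro t
    exact (tpi hfin a V x).symm_apply_apply t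
  inv_hom_id := by
    apply NatTrans.ext; funext x; apply ModuleCat.hom_ext; apply LinearMap.ext; intro t
    exact (tpi hfin a V x).apply_symm_apply t

end Conj

end Infra

section Ext

variable {k : Type} [Field k] {Q : Type} [Quiver.{0} Q]

lemma app_section_injective {A B : RepQ k Q} (f : A ⟶ B) (g : B ⟶ A) (hfg : f ≫ g = 𝟙 A)
    (x : Paths Q) : Function.Injective (f.app x) := by
  intro a b hab
  have h1 : ∀ v : A.obj x, g.app x (f.app x v) = v :=
    fun v => congrArg (fun (t : A ⟶ A) => t.app x v) hfg
  rw [← h1 a, ← h1 b, hab]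

lemma ext_funRep {A B : RepQ k Q} (j : A ⟶ B)
    (hj : ∀ x : Q, Function.Injective (j.app (vtx x)))
    (a : Q) (V : ModuleCat.{0} k) (u : A ⟶ funRep a V) :
    ∃ g : B ⟶ funRep a V, j ≫ g = u := by
  classical
  let φ : A.obj (vtx a) →ₗ[k] V :=
    (LinearMap.proj (Quiver.Path.nil : Quiver.Path a a)).comp
      ((u.app (vtx a)).hom : A.obj (vtx a) →ₗ[k] (Quiver.Path a a → V))
  obtain ⟨r, hr⟩ := LinearMap.exists_leftInverse_of_injective (j.app (vtx a)).hom
    (LinearMap.ker_eq_bot.mpr (hj a))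
  let φ' : B.obj (vtx a) →ₗ[k] V := φ.comp r
  let capp : ∀ x : Q, B.obj (vtx x) ⟶ (funRep (k := k) (Q := Q) a V).obj (vtx x) :=
    fun x => ModuleCat.ofHom
    { toFun := fun v => fun p => φ' (B.map (pth p) v)
      map_add' := fun v w => by
        funext p
        show φ' (B.map (pth p) (v + w)) = φ' (B.map (pth p) v) + φ' (B.map (pth p) w)
        rw [map_add, map_add]
      map_smul' := fun c v => by
        funext p
        show φ' (B.map (pth p) (c • v)) = c • φ' (B.map (pth p) v)
        rw [map_smul, map_smul] }
  have hnat : ∀ {x y : Q} (e : x ⟶ y),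
      B.map (arr e) ≫ capp y = capp x ≫ (funRep a V).map (arr e) := by
    intro x y e
    apply ModuleCat.hom_ext; apply LinearMap.ext; intro v
    funext σ
    show φ' (B.map (pth σ) (B.map (arr e) v))
      = ((funRep a V).map (arr e) (capp x v)) σ
    rw [funRep_map_arr]
    show φ' (B.map (pth σ) (B.map (arr e) v))
      = φ' (B.map (pth ((Quiver.Hom.toPath e).comp σ)) v)
    congr 1
    have : B.map (arr e) ≫ B.map (pth σ) = B.map (pth ((Quiver.Hom.toPath e).comp σ)) := by
      rw [← B.map_comp]; rfl
    exact (congrArg (fun (t : B.obj (vtx x) ⟶ B.obj (vtx a)) => t v) this).symm ▸ rfl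
  refine ⟨mkNT capp hnat, ?_⟩
  apply NatTrans.ext; funext x; apply ModuleCat.hom_ext; apply LinearMap.ext; intro w
  funext p
  show φ' (B.map (pth p) (j.app x w)) = u.app x w p
  have hjn : B.map (pth p) (j.app x w) = j.app (vtx a) (A.map (pth p) w) := by
    have := j.naturality (pth p)
    exact (congrArg (fun (t : A.obj x ⟶ B.obj (vtx a)) => t w) this).symm
  rw [hjn]
  have hr' : r (j.app (vtx a) (A.map (pth p) w)) = A.map (pth p) w :=
    congrArg (fun (t : A.obj (vtx a) →ₗ[k] A.obj (vtx a)) => t (A.map (pth p) w)) hr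
  show φ (r (j.app (vtx a) (A.map (pth p) w))) = u.app x w p
  rw [hr']
  show u.app (vtx a) (A.map (pth p) w) Quiver.Path.nil = u.app x w p
  have hun : u.app (vtx a) (A.map (pth p) w)
      = (funRep a V).map (pth p) (u.app x w) := by
    have := u.naturality (pth p)
    exact congrArg (fun (t : A.obj x ⟶ (funRep a V).obj (vtx a)) => t w) this
  rw [hun]
  exact (funRep_map_path (x := x) a V p (u.app x w) Quiver.Path.nil).trans
    (by erw [Quiver.Path.comp_nil])

lemma ext_inj (hfin : ∀ x y : Q, Finite (Quiver.Path x y)) {A B Y : RepQ k Q}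
    (hY : MemInj k Q Y) (j : A ⟶ B)
    (hj : ∀ x : Q, Function.Injective (j.app (vtx x))) (u : A ⟶ Y) :
    ∃ g : B ⟶ Y, j ≫ g = u := by
  obtain ⟨n, a, V, ⟨e⟩⟩ := hY
  let E : Y ≅ ⨁ (fun i => funRep (a i) (V i)) :=
    e ≪≫ biproduct.mapIso (fun i => tensorFunIso hfin (a i) (V i))
  choose g hg using fun i => ext_funRep j hj (a i) (V i) (u ≫ E.hom ≫ biproduct.π _ i)
  refine ⟨biproduct.lift g ≫ E.inv, ?_⟩
  have hlift : j ≫ biproduct.lift g = u ≫ E.hom := by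
    apply biproduct.hom_ext
    intro i
    rw [Category.assoc, biproduct.lift_π, hg i, Category.assoc]
  rw [← Category.assoc, hlift, Category.assoc, E.hom_inv_id, Category.comp_id]

end Ext


section InjLemma

variable {k : Type} [Field k] {Q : Type} [Quiver.{0} Q]

lemma appNat {F G : RepQ k Q} (τ : F ⟶ G) {c d : Paths Q} (m : c ⟶ d) (z : F.obj c) :
    τ.app d (F.map m z) = G.map m (τ.app c z) :=
  congrArg (fun (t : F.obj c ⟶ G.obj d) => t z) (τ.naturality m)

open Classical in
lemma inj_restrict (hfin : ∀ x y : Q, Finite (Quiver.Path x y)) {X Y : RepQ k Q}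
    {Q' S O : Set Q}
    (hsuppY : suppR k Q Y ⊆ Q') (hinjY : MemInj k Q (restrictRep k Q Y S))
    (hQS : ∀ z ∈ Q', z ∉ S → z ∈ O)
    (hsoc : {x : Q | socle k Q (restrictRep k Q Y S) x ≠ ⊥} ⊆ O)
    (f : X ⟶ Y) (hf : restrictHom k Q f O = 0) : f = 0 := by
  obtain ⟨n, a, V, ⟨e0⟩⟩ := hinjY
  let W : Fin n → RepQ k Q := fun i => funRep (a i) (V i)
  let E : restrictRep k Q Y S ≅ ⨁ W :=
    e0 ≪≫ biproduct.mapIso (fun i => tensorFunIso hfin (a i) (V i))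
  by_contra hne
  have hex : ∃ (x : Q) (v : X.obj (vtx x)), f.app (vtx x) v ≠ 0 := by
    by_contra hx
    push_neg at hx
    apply hne
    apply NatTrans.ext; funext x; apply ModuleCat.hom_ext; apply LinearMap.ext; intro v
    exact hx x v
  obtain ⟨x, v, hv⟩ := hex
  have hxO : x ∉ O := by
    intro hxO
    have h1 : (restrictHom k Q f O).app (vtx x) (fun _ => v) ⟨hxO⟩ = f.app (vtx x) v := rfl
    rw [hf] at h1
    exact hv (h1.symm.trans rfl)
  have hxQ' : x ∈ Q' := hsuppY ⟨⟨f.app (vtx x) v, 0, hv⟩⟩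
  have hxS : x ∈ S := by
    by_contra h
    exact hxO (hQS x hxQ' h)
  let F : restrictRep k Q X S ⟶ ⨁ W := restrictHom k Q f S ≫ E.hom
  set w := F.app (vtx x) (fun _ => v) with hwdef
  have hw : w ≠ 0 := by
    intro h0
    have hinj := app_section_injective E.hom E.inv E.hom_inv_id (vtx x)
    have h1 : (restrictHom k Q f S).app (vtx x) (fun _ => v) = 0 := by
      apply hinj
      rw [map_zero]
      exact h0
    exact hv (congrFun h1 ⟨hxS⟩)
  have hex2 : ∃ i, (biproduct.π W i).app (vtx x) w ≠ 0 := by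
    by_contra hall
    push_neg at hall
    apply hw
    have htot := biproduct.total (f := W)
    have h1 : (∑ j : Fin n, biproduct.π W j ≫ biproduct.ι W j).app (vtx x) w = w := by
      rw [htot]; rfl
    rw [← h1, NatTrans.app_sum]
    change ModuleCat.Hom.hom _ w = 0
    rw [ModuleCat.hom_sum, LinearMap.coe_sum, Finset.sum_apply]
    apply Finset.sum_eq_zero
    intro i _
    show (biproduct.ι W i).app (vtx x) ((biproduct.π W i).app (vtx x) w) = 0
    rw [hall i, map_zero]
  obtain ⟨i, hwi⟩ := hex2
  set t := (biproduct.π W i).app (vtx x) w with htdef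
  have hex3 : ∃ p : Quiver.Path x (a i), (t : Quiver.Path x (a i) → V i) p ≠ 0 := by
    by_contra hall
    push_neg at hall
    exact hwi (funext fun p => hall p)
  obtain ⟨p, hp⟩ := hex3
  -- the socle of the restriction is nonzero at `a i`
  let s0 : (funRep (a i) (V i)).obj (vtx (a i)) :=
    Pi.single Quiver.Path.nil (t p)
  let s : (restrictRep k Q Y S).obj (vtx (a i)) :=
    E.inv.app (vtx (a i)) ((biproduct.ι W i).app (vtx (a i)) s0)
  have hs0ne : s0 ≠ 0 := by
    intro h0
    have h2 := congrFun h0 Quiver.Path.nil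
    simp only [s0] at h2
    erw [Pi.single_eq_same] at h2
    exact hp h2
  have hsne : s ≠ 0 := by
    intro h0
    apply hs0ne
    apply app_section_injective (biproduct.ι W i) (biproduct.π W i)
      (biproduct.ι_π_self W i) (vtx (a i))
    apply app_section_injective E.inv E.hom E.inv_hom_id (vtx (a i))
    rw [map_zero, map_zero]
    exact h0
  have hsmem : s ∈ socle k Q (restrictRep k Q Y S) (a i) := by
    rw [socle]
    refine (Submodule.mem_iInf _).mpr fun y => ?_
    refine (Submodule.mem_iInf _).mpr fun α => ?_
    rw [LinearMap.mem_ker]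
    have hmap0 : (funRep (a i) (V i)).map (arr α) s0 = 0 := by
      funext σ
      rw [funRep_map_arr]
      simp only [s0]
      erw [Pi.single_eq_of_ne]
      rfl
      intro hcomp
      have := congrArg Quiver.Path.length hcomp
      rw [Quiver.Path.length_comp] at this
      simp [Quiver.Hom.toPath] at this
    calc (restrictRep k Q Y S).map (arr α) s
        = E.inv.app (vtx y) ((⨁ W).map (arr α) ((biproduct.ι W i).app (vtx (a i)) s0)) :=
          (appNat E.inv (arr α) _).symm
      _ = E.inv.app (vtx y) ((biproduct.ι W i).app (vtx y)
            ((funRep (a i) (V i)).map (arr α) s0)) := by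
          rw [appNat (biproduct.ι W i) (arr α) s0]
      _ = 0 := by rw [hmap0, map_zero, map_zero]
  have hsocai : socle k Q (restrictRep k Q Y S) (a i) ≠ ⊥ :=
    Submodule.ne_bot_iff _ |>.mpr ⟨s, hsmem, hsne⟩
  have haiO : a i ∈ O := hsoc hsocai
  have hSai : a i ∈ S := by
    by_contra hnot
    apply hsocai
    haveI : Subsingleton ((restrictRep k Q Y S).obj (vtx (a i))) :=
      ⟨fun u u' => funext (fun h => absurd h.down hnot)⟩
    exact Subsingleton.elim _ _
  -- push `v` along `p` and derive the contradiction
  have hFn : F.app (vtx (a i)) ((restrictRep k Q X S).map (pth p) (fun _ => v))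
      = (⨁ W).map (pth p) w := by
    rw [hwdef]
    exact appNat F (pth p) (fun _ => v)
  have hfai : f.app (vtx (a i))
      (((restrictRep k Q X S).map (pth p) (fun _ => v)) ⟨hSai⟩) ≠ 0 := by
    intro h0
    have hzero : (restrictHom k Q f S).app (vtx (a i))
        ((restrictRep k Q X S).map (pth p) (fun _ => v)) = 0 := by
      funext hq
      show f.app (vtx (a i)) (((restrictRep k Q X S).map (pth p) (fun _ => v)) hq) = 0
      rw [Subsingleton.elim hq (⟨hSai⟩ : PLift (a i ∈ S))]
      exact h0
    have h1 : F.app (vtx (a i)) ((restrictRep k Q X S).map (pth p) (fun _ => v)) = 0 := by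
      show E.hom.app (vtx (a i))
        ((restrictHom k Q f S).app (vtx (a i))
          ((restrictRep k Q X S).map (pth p) (fun _ => v))) = 0
      rw [hzero, map_zero]
    have h2 : (⨁ W).map (pth p) w = 0 := hFn.symm.trans h1
    have h3 : (funRep (a i) (V i)).map (pth p) t = 0 := by
      rw [htdef, ← appNat (biproduct.π W i) (pth p) w, h2, map_zero]
    have h4 : ((funRep (a i) (V i)).map (pth p) t) Quiver.Path.nil = (0 : V i) := by
      rw [h3]; rfl
    rw [funRep_map_path, Quiver.Path.comp_nil] at h4
    exact hp h4
  have h1 : (restrictHom k Q f O).app (vtx (a i))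
      (fun _ => ((restrictRep k Q X S).map (pth p) (fun _ => v)) ⟨hSai⟩) ⟨haiO⟩
      = f.app (vtx (a i)) (((restrictRep k Q X S).map (pth p) (fun _ => v)) ⟨hSai⟩) := rfl
  rw [hf] at h1
  exact hfai (h1.symm.trans rfl)

end InjLemma


section SurLemma

variable {k : Type} [Field k] {Q : Type} [Quiver.{0} Q]

open Classical in
lemma unw_natural {M N : RepQ k Q} {S : Set Q}
    (h : restrictRep k Q M S ⟶ restrictRep k Q N S) {x y : Q} (e : x ⟶ y)
    (hx : x ∈ S) (hy : y ∈ S) (v : M.obj (vtx x)) :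
    unw (h.app (vtx y)).hom (M.map (arr e) v) = N.map (arr e) (unw (h.app (vtx x)).hom v) := by
  have hnat := appNat h (arr e) ((fun _ => v) : PLift (x ∈ S) → M.obj (vtx x))
  have hMl : (restrictRep k Q M S).map (arr e) ((fun _ => v) : PLift (x ∈ S) → M.obj (vtx x))
      = fun _ => M.map (arr e) v := by
    rw [restrictRep_map_arr]
    funext hq
    show (if h' : x ∈ S then M.map (arr e) v else 0) = M.map (arr e) v
    rw [dif_pos hx]
  rw [hMl] at hnat
  rw [unw_apply (h.app (vtx y)).hom hy (M.map (arr e) v) ⟨hy⟩,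
    unw_apply (h.app (vtx x)).hom hx v ⟨hx⟩]
  have h2 := congrFun hnat (⟨hy⟩ : PLift (y ∈ S))
  rw [restrictRep_map_arr] at h2
  have h3 : piCondMap k (N.map (arr e)).hom (x ∈ S) (y ∈ S)
        (h.app (vtx x) (fun _ => v)) ⟨hy⟩
      = N.map (arr e) (h.app (vtx x) (fun _ => v) ⟨hx⟩) := by
    show (if h' : x ∈ S then N.map (arr e) ((h.app (vtx x) (fun _ => v)) ⟨h'⟩) else 0)
      = N.map (arr e) (h.app (vtx x) (fun _ => v) ⟨hx⟩)
    rw [dif_pos hx]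
  exact h2.trans h3

open Classical in
lemma sur_restrict (hfin : ∀ x y : Q, Finite (Quiver.Path x y)) {X Y : RepQ k Q}
    {Q' S O : Set Q}
    (hSQ' : S ⊆ Q') (hsuppX : suppR k Q X ⊆ Q') (hsuppY : suppR k Q Y ⊆ Q')
    (hinjY : MemInj k Q (restrictRep k Q Y S))
    (hO : SuccClosedIn O Q')
    (hQS : ∀ z ∈ Q', z ∉ S → z ∈ O)
    (haug2 : ∀ ⦃x y : Q⦄, (x ⟶ y) → x ∈ Q' → y ∈ Q' → ¬(x ∈ S ∧ y ∈ S) → x ∈ O)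
    (h : restrictRep k Q X O ⟶ restrictRep k Q Y O) :
    ∃ f : X ⟶ Y, restrictHom k Q f O = h := by
  set T : Set Q := O ∩ S with hT
  -- the inclusion j : X_T ⟶ X_S
  have hjnat : ∀ {x y : Q} (e : x ⟶ y),
      (restrictRep k Q X T).map (arr e)
          ≫ (ModuleCat.ofHom (piCondMap k LinearMap.id (y ∈ T) (y ∈ S))
            : ((restrictRep k Q X T).obj (vtx y)) ⟶ ((restrictRep k Q X S).obj (vtx y)))
        = ModuleCat.ofHom (piCondMap k LinearMap.id (x ∈ T) (x ∈ S))
            ≫ (restrictRep k Q X S).map (arr e) := by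
    intro x y e
    rw [restrictRep_map_arr, restrictRep_map_arr]
    apply ModuleCat.hom_ext; apply LinearMap.ext; intro gv
    funext hyS
    show piCondMap k LinearMap.id (y ∈ T) (y ∈ S)
        (piCondMap k (X.map (arr e)).hom (x ∈ T) (y ∈ T) gv) hyS
      = piCondMap k (X.map (arr e)).hom (x ∈ S) (y ∈ S)
        (piCondMap k LinearMap.id (x ∈ T) (x ∈ S) gv) hyS
    erw [piCondMap_apply, piCondMap_apply]
    by_cases hxT : x ∈ T
    · have hyT : y ∈ T := ⟨hO.2 e hxT.1 (hSQ' hyS.down), hyS.down⟩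
      erw [dif_pos hyT, dif_pos hxT.2, piCondMap_apply, dif_pos hxT,
        piCondMap_apply, dif_pos hxT]
      rfl
    · by_cases hyT : y ∈ T
      · erw [dif_pos hyT, piCondMap_apply, dif_neg hxT]
        by_cases hxS : x ∈ S
        · erw [dif_pos hxS, piCondMap_apply, dif_neg hxT, map_zero, map_zero]
        · erw [dif_neg hxS, map_zero]
      · erw [dif_neg hyT]
        by_cases hxS : x ∈ S
        · erw [dif_pos hxS, piCondMap_apply, dif_neg hxT, map_zero]
        · erw [dif_neg hxS]
  let j : restrictRep k Q X T ⟶ restrictRep k Q X S :=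
    mkNT (fun x => ModuleCat.ofHom (piCondMap k LinearMap.id (x ∈ T) (x ∈ S))) hjnat
  have hjinj : ∀ x : Q, Function.Injective (j.app (vtx x)) := by
    intro x u u' huu
    funext hxT
    have h2 : (j.app (vtx x) u) ⟨hxT.down.2⟩ = (j.app (vtx x) u') ⟨hxT.down.2⟩ := by rw [huu]
    have h3 : ∀ u0 : (restrictRep k Q X T).obj (vtx x),
        (j.app (vtx x) u0) ⟨hxT.down.2⟩ = u0 ⟨hxT.down⟩ := by
      intro u0
      show piCondMap k LinearMap.id (x ∈ T) (x ∈ S) u0 ⟨hxT.down.2⟩ = u0 ⟨hxT.down⟩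
      erw [piCondMap_apply, dif_pos hxT.down]
      rfl
    rw [h3 u, h3 u'] at h2
    exact h2
  -- the morphism u : X_T ⟶ Y_S induced by h
  have hunat : ∀ {x y : Q} (e : x ⟶ y),
      (restrictRep k Q X T).map (arr e)
          ≫ (ModuleCat.ofHom (piCondMap k (unw (h.app (vtx y)).hom) (y ∈ T) (y ∈ S))
            : ((restrictRep k Q X T).obj (vtx y)) ⟶ ((restrictRep k Q Y S).obj (vtx y)))
        = ModuleCat.ofHom (piCondMap k (unw (h.app (vtx x)).hom) (x ∈ T) (x ∈ S))
            ≫ (restrictRep k Q Y S).map (arr e) := by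
    intro x y e
    rw [restrictRep_map_arr, restrictRep_map_arr]
    apply ModuleCat.hom_ext; apply LinearMap.ext; intro gv
    funext hyS
    show piCondMap k (unw (h.app (vtx y)).hom) (y ∈ T) (y ∈ S)
        (piCondMap k (X.map (arr e)).hom (x ∈ T) (y ∈ T) gv) hyS
      = piCondMap k (Y.map (arr e)).hom (x ∈ S) (y ∈ S)
        (piCondMap k (unw (h.app (vtx x)).hom) (x ∈ T) (x ∈ S) gv) hyS
    erw [piCondMap_apply, piCondMap_apply]
    by_cases hxT : x ∈ T
    · have hyO : y ∈ O := hO.2 e hxT.1 (hSQ' hyS.down)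
      have hyT : y ∈ T := ⟨hyO, hyS.down⟩
      erw [dif_pos hyT, dif_pos hxT.2, piCondMap_apply, dif_pos hxT,
        piCondMap_apply, dif_pos hxT]
      exact unw_natural h e hxT.1 hyO (gv ⟨hxT⟩)
    · by_cases hyT : y ∈ T
      · erw [dif_pos hyT, piCondMap_apply, dif_neg hxT, map_zero]
        by_cases hxS : x ∈ S
        · erw [dif_pos hxS, piCondMap_apply, dif_neg hxT, map_zero]
        · erw [dif_neg hxS]
      · erw [dif_neg hyT]
        by_cases hxS : x ∈ S
        · erw [dif_pos hxS, piCondMap_apply, dif_neg hxT, map_zero]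
        · erw [dif_neg hxS]
  let u : restrictRep k Q X T ⟶ restrictRep k Q Y S :=
    mkNT (fun x => ModuleCat.ofHom (piCondMap k (unw (h.app (vtx x)).hom) (x ∈ T) (x ∈ S))) hunat
  obtain ⟨g, hg⟩ := ext_inj hfin hinjY j hjinj u
  -- on T, the extension g agrees with h
  have hgh : ∀ (z : Q) (hz : z ∈ T) (v : X.obj (vtx z)),
      unw (g.app (vtx z)).hom v = unw (h.app (vtx z)).hom v := by
    intro z hz v
    have h1 : g.app (vtx z) (j.app (vtx z) (fun _ => v)) = u.app (vtx z) (fun _ => v) :=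
      congrArg (fun (t : restrictRep k Q X T ⟶ restrictRep k Q Y S)
        => t.app (vtx z) (fun _ => v)) hg
    have h2 : j.app (vtx z) ((fun _ => v) : PLift (z ∈ T) → X.obj (vtx z))
        = (fun _ => v) := by
      funext hq
      show piCondMap k LinearMap.id (z ∈ T) (z ∈ S) (fun _ => v) hq = v
      erw [piCondMap_apply, dif_pos hz]
      rfl
    rw [h2] at h1
    have h3 := congrFun h1 (⟨hz.2⟩ : PLift (z ∈ S))
    calc unw (g.app (vtx z)).hom v
        = g.app (vtx z) (fun _ => v) ⟨hz.2⟩ := unw_apply _ hz.2 v _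
      _ = u.app (vtx z) (fun _ => v) ⟨hz.2⟩ := h3
      _ = unw (h.app (vtx z)).hom v := by
          show piCondMap k (unw (h.app (vtx z)).hom) (z ∈ T) (z ∈ S) (fun _ => v) ⟨hz.2⟩
            = unw (h.app (vtx z)).hom v
          erw [piCondMap_apply, dif_pos hz]
  -- glue the extension
  let fapp : ∀ x : Q, X.obj (vtx x) →ₗ[k] Y.obj (vtx x) := fun x =>
    if x ∈ O then unw (h.app (vtx x)).hom else if x ∈ S then unw (g.app (vtx x)).hom else 0
  have hfO : ∀ z, z ∈ O → fapp z = unw (h.app (vtx z)).hom := fun z hz => if_pos hz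
  have hfS : ∀ z, z ∉ O → z ∈ S → fapp z = unw (g.app (vtx z)).hom := by
    intro z hz1 hz2
    show (if z ∈ O then unw (h.app (vtx z)).hom else if z ∈ S then unw (g.app (vtx z)).hom else 0)
      = unw (g.app (vtx z)).hom
    rw [if_neg hz1, if_pos hz2]
  have hfnat : ∀ {x y : Q} (e : x ⟶ y),
      X.map (arr e) ≫ ModuleCat.ofHom (fapp y) = ModuleCat.ofHom (fapp x) ≫ Y.map (arr e) := by
    intro x y e
    apply ModuleCat.hom_ext; apply LinearMap.ext; intro v
    show fapp y (X.map (arr e) v) = Y.map (arr e) (fapp x v)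
    rcases subsingleton_or_nontrivial (Y.obj (vtx y)) with hYs | hYn
    · exact Subsingleton.elim _ _
    rcases subsingleton_or_nontrivial (X.obj (vtx x)) with hXs | hXn
    · rw [Subsingleton.elim v (0 : X.obj (vtx x))]
      simp
    have hyQ' : y ∈ Q' := hsuppY hYn
    have hxQ' : x ∈ Q' := hsuppX hXn
    by_cases hxO : x ∈ O
    · have hyO : y ∈ O := hO.2 e hxO hyQ'
      rw [hfO y hyO, hfO x hxO]
      exact unw_natural h e hxO hyO v
    · have hxS : x ∈ S := by
        by_contra hns
        exact hxO (hQS x hxQ' hns)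
      rw [hfS x hxO hxS]
      by_cases hyS : y ∈ S
      · by_cases hyO : y ∈ O
        · rw [hfO y hyO, ← hgh y ⟨hyO, hyS⟩ (X.map (arr e) v)]
          exact unw_natural g e hxS hyS v
        · rw [hfS y hyO hyS]
          exact unw_natural g e hxS hyS v
      · exact absurd (haug2 e hxQ' hyQ' (fun hc => hyS hc.2)) hxO
  refine ⟨mkNT (fun x => ModuleCat.ofHom (fapp x)) hfnat, ?_⟩
  apply NatTrans.ext; funext z; apply ModuleCat.hom_ext; apply LinearMap.ext; intro wv
  funext hz
  show (mkNT (fun x => ModuleCat.ofHom (fapp x)) hfnat).app z (wv hz) = h.app z wv hz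
  have hz' : z ∈ O := hz.down
  have happ : ∀ t, (mkNT (fun x => ModuleCat.ofHom (fapp x)) hfnat).app z t = fapp z t :=
    fun _ => rfl
  erw [happ, hfO z hz', unw_apply (h.app (vtx z)).hom hz' (wv hz) hz]
  have hwv : (fun _ : PLift (z ∈ O) => wv hz) = wv :=
    funext (fun hq => congrArg wv (Subsingleton.elim hz hq))
  erw [hwv]
  rfl

end SurLemma

/-- Let `k` be a field, `Q` a strongly locally finite quiver and `Q'` a
full subquiver of `Q`. Let `M, N ∈ Rep^-(Q)` be such that `M ⊕ N` is supported by `Q'` and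
injective restricted to a full subquiver `Σ` of `Q'`, and let `Ω` be a successor-closed
subquiver of `Q'` containing the socle-support of `(M ⊕ N)_Σ` and the augmented complement
of `Σ` in `Q'`. Then: (1) `M ≅ N` iff `M_Ω ≅ N_Ω`; (2) `M` is indecomposable iff `M_Ω` is
indecomposable; (3) a morphism `f : M ⟶ N` is a section (resp. a retraction) iff
`f_Ω : M_Ω ⟶ N_Ω` is a section (resp. a retraction). -/
theorem statement_7 (k : Type) [Field k] (Q : Type) [Quiver.{0} Q]
    (hQ : StronglyLocallyFinite Q) (Q' : Set Q) (M N : RepQ k Q)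
    (hM : AlmostFinCopresented k Q M) (hN : AlmostFinCopresented k Q N)
    (Sig : Set Q) (hSig : Sig ⊆ Q')
    (hsupp : suppR k Q (M ⊞ N) ⊆ Q')
    (hinj : MemInj k Q (restrictRep k Q (M ⊞ N) Sig))
    (Om : Set Q) (hOm : SuccClosedIn Om Q')
    (hsoc : {x : Q | socle k Q (restrictRep k Q (M ⊞ N) Sig) x ≠ ⊥} ⊆ Om)
    (haug : augComplement Sig Q' ⊆ Om) :
    (Nonempty (M ≅ N) ↔ Nonempty (restrictRep k Q M Om ≅ restrictRep k Q N Om)) ∧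
    (Indec M ↔ Indec (restrictRep k Q M Om)) ∧
    (∀ f : M ⟶ N,
      (IsSect f ↔ IsSect (restrictHom k Q f Om)) ∧
      (IsRetr f ↔ IsRetr (restrictHom k Q f Om))) := by
  classical
  have hQp : ∀ x y : Q, Finite (Quiver.Path x y) := hQ.2.2
  have haug1 : ∀ z ∈ Q', z ∉ Sig → z ∈ Om := fun z hz hns => haug (Or.inl ⟨hz, hns⟩)
  have haug2 : ∀ ⦃x y : Q⦄, (x ⟶ y) → x ∈ Q' → y ∈ Q' → ¬(x ∈ Sig ∧ y ∈ Sig) → x ∈ Om :=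
    fun x y e hx hy hn => haug (Or.inr ⟨hx, ⟨x, y, e, hx, hy, hn, Or.inl rfl⟩⟩)
  have hsuppL : suppR k Q (M ⊞ N) ⊆ Q' := hsupp
  -- injectivity of restriction
  have keyinjL : ∀ (A : RepQ k Q) (f : A ⟶ M ⊞ N), restrictHom k Q f Om = 0 → f = 0 :=
    fun A f hf => inj_restrict hQp hsuppL hinj haug1 hsoc f hf
  have keyinj : ∀ (A B : RepQ k Q) (iB : B ⟶ M ⊞ N) (pB : M ⊞ N ⟶ B), iB ≫ pB = 𝟙 B →
      ∀ (f f' : A ⟶ B), restrictHom k Q f Om = restrictHom k Q f' Om → f = f' := by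
    intro A B iB pB hip f f' hff
    have h0 : restrictHom k Q (f ≫ iB - f' ≫ iB) Om = 0 := by
      rw [restrictHom_sub, restrictHom_comp, restrictHom_comp, hff, sub_self]
    have h2 : f ≫ iB = f' ≫ iB := sub_eq_zero.mp (keyinjL A _ h0)
    calc f = f ≫ iB ≫ pB := by rw [hip, Category.comp_id]
      _ = (f ≫ iB) ≫ pB := by rw [Category.assoc]
      _ = (f' ≫ iB) ≫ pB := by rw [h2]
      _ = f' ≫ iB ≫ pB := by rw [Category.assoc]
      _ = f' := by rw [hip, Category.comp_id]
  -- surjectivity of restriction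
  have keysurL : ∀ h0 : restrictRep k Q (M ⊞ N) Om ⟶ restrictRep k Q (M ⊞ N) Om,
      ∃ f : M ⊞ N ⟶ M ⊞ N, restrictHom k Q f Om = h0 :=
    fun h0 => sur_restrict hQp hSig hsuppL hsuppL hinj hOm haug1 haug2 h0
  have keysur : ∀ (A B : RepQ k Q) (iA : A ⟶ M ⊞ N) (pA : M ⊞ N ⟶ A)
      (iB : B ⟶ M ⊞ N) (pB : M ⊞ N ⟶ B),
      iA ≫ pA = 𝟙 A → iB ≫ pB = 𝟙 B →
      ∀ h0 : restrictRep k Q A Om ⟶ restrictRep k Q B Om,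
        ∃ f : A ⟶ B, restrictHom k Q f Om = h0 := by
    intro A B iA pA iB pB hA hB h0
    obtain ⟨F, hF⟩ := keysurL (restrictHom k Q pA Om ≫ h0 ≫ restrictHom k Q iB Om)
    refine ⟨iA ≫ F ≫ pB, ?_⟩
    rw [restrictHom_comp, restrictHom_comp, hF]
    calc restrictHom k Q iA Om
          ≫ (restrictHom k Q pA Om ≫ h0 ≫ restrictHom k Q iB Om) ≫ restrictHom k Q pB Om
        = (restrictHom k Q iA Om ≫ restrictHom k Q pA Om)
            ≫ h0 ≫ (restrictHom k Q iB Om ≫ restrictHom k Q pB Om) := by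
          simp only [Category.assoc]
      _ = h0 := by
          rw [← restrictHom_comp, ← restrictHom_comp, hA, hB,
            restrictHom_id, restrictHom_id, Category.id_comp, Category.comp_id]
  refine ⟨?_, ?_, ?_⟩
  · -- (1) isomorphism
    constructor
    · rintro ⟨φ⟩
      exact ⟨{ hom := restrictHom k Q φ.hom Om
               inv := restrictHom k Q φ.inv Om
               hom_inv_id := by rw [← restrictHom_comp, φ.hom_inv_id, restrictHom_id]
               inv_hom_id := by rw [← restrictHom_comp, φ.inv_hom_id, restrictHom_id] }⟩
    · rintro ⟨ψ⟩
      obtain ⟨f, hf⟩ := keysur M N biprod.inl biprod.fst biprod.inr biprod.snd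
        biprod.inl_fst biprod.inr_snd ψ.hom
      obtain ⟨g, hg⟩ := keysur N M biprod.inr biprod.snd biprod.inl biprod.fst
        biprod.inr_snd biprod.inl_fst ψ.inv
      have hfg : f ≫ g = 𝟙 M := by
        apply keyinj M M biprod.inl biprod.fst biprod.inl_fst
        rw [restrictHom_comp, hf, hg, ψ.hom_inv_id, restrictHom_id]
      have hgf : g ≫ f = 𝟙 N := by
        apply keyinj N N biprod.inr biprod.snd biprod.inr_snd
        rw [restrictHom_comp, hf, hg, ψ.inv_hom_id, restrictHom_id]
      exact ⟨{ hom := f, inv := g, hom_inv_id := hfg, inv_hom_id := hgf }⟩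
  · -- (2) indecomposability
    have hres0 : restrictHom k Q (0 : M ⟶ M) Om = 0 := restrictHom_zero M M Om
    have hiso0 : IsZero M ↔ IsZero (restrictRep k Q M Om) := by
      constructor
      · intro hz
        rw [IsZero.iff_id_eq_zero] at hz ⊢
        rw [← restrictHom_id, hz, hres0]
      · intro hz
        rw [IsZero.iff_id_eq_zero] at hz ⊢
        apply keyinj M M biprod.inl biprod.fst biprod.inl_fst
        rw [restrictHom_id, hz, hres0]
    constructor
    · rintro ⟨hnz, hid⟩
      refine ⟨fun hz => hnz (hiso0.mpr hz), ?_⟩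
      intro ε hε
      obtain ⟨e1, he1⟩ := keysur M M biprod.inl biprod.fst biprod.inl biprod.fst
        biprod.inl_fst biprod.inl_fst ε
      have he2 : e1 ≫ e1 = e1 := by
        apply keyinj M M biprod.inl biprod.fst biprod.inl_fst
        rw [restrictHom_comp, he1, hε]
      rcases hid e1 he2 with h | h
      · left; rw [← he1, h, hres0]
      · right; rw [← he1, h, restrictHom_id]
    · rintro ⟨hnz, hid⟩
      refine ⟨fun hz => hnz (hiso0.mp hz), ?_⟩
      intro e1 he1
      rcases hid (restrictHom k Q e1 Om)
        (by rw [← restrictHom_comp, he1]) with h | h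
      · left
        exact keyinj M M biprod.inl biprod.fst biprod.inl_fst e1 0 (by rw [h, hres0])
      · right
        exact keyinj M M biprod.inl biprod.fst biprod.inl_fst e1 (𝟙 M)
          (by rw [h, restrictHom_id])
  · -- (3) sections and retractions
    intro f
    constructor
    · constructor
      · rintro ⟨r, hr⟩
        exact ⟨restrictHom k Q r Om, by rw [← restrictHom_comp, hr, restrictHom_id]⟩
      · rintro ⟨r, hr⟩
        obtain ⟨g, hgr⟩ := keysur N M biprod.inr biprod.snd biprod.inl biprod.fst
          biprod.inr_snd biprod.inl_fst r
        refine ⟨g, ?_⟩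
        apply keyinj M M biprod.inl biprod.fst biprod.inl_fst
        rw [restrictHom_comp, hgr, hr, restrictHom_id]
    · constructor
      · rintro ⟨s, hs⟩
        exact ⟨restrictHom k Q s Om, by rw [← restrictHom_comp, hs, restrictHom_id]⟩
      · rintro ⟨s, hs⟩
        obtain ⟨g, hgs⟩ := keysur N M biprod.inr biprod.snd biprod.inl biprod.fst
          biprod.inr_snd biprod.inl_fst s
        refine ⟨g, ?_⟩
        apply keyinj N N biprod.inr biprod.snd biprod.inr_snd
        rw [restrictHom_comp, hgs, hs, restrictHom_id]
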